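/- Let n ≥ 1 and G ∈ 𝒢_n. Every cycle of G contains at least one vertex of column C(n) and at least one vertex of column C(n+1). -/

import Mathlib

open Finset

noncomputable section

/-- Vertices of a complete binary tree of height `n`: a level `k ≤ n` and an index below `2^k`. -/
abbrev TV (n : ℕ) : Type := Σ k : Fin (n+1), Fin (2^(k : ℕ))

/-- Adjacency in a complete binary tree: one vertex is the parent of the other. -/
def treeAdj (n : ℕ) (a b : TV n) : Prop :=
  ((a.1 : ℕ) + 1 = (b.1 : ℕ) ∧ (b.2 : ℕ) / 2 = (a.2 : ℕ)) ∨
  ((b.1 : ℕ) + 1 = (a.1 : ℕ) ∧ (a.2 : ℕ) / 2 = (b.2 : ℕ))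

instance (n : ℕ) (a b : TV n) : Decidable (treeAdj n a b) := by
  unfold treeAdj; infer_instance

lemma treeAdj_symm (n : ℕ) : Symmetric (treeAdj n) := by
  intro a b h; unfold treeAdj at *; tauto

lemma treeAdj_irrefl (n : ℕ) (a : TV n) : ¬ treeAdj n a a := by
  unfold treeAdj; omega

/-- Vertices of a welded-trees graph: disjoint union of the two trees. -/
abbrev WTV (n : ℕ) : Type := TV n ⊕ TV n

def wtRoot (n : ℕ) : TV n := ⟨⟨0, Nat.succ_pos n⟩, ⟨0, by norm_num⟩⟩

/-- The root of the left tree. -/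
def wtSource (n : ℕ) : WTV n := Sum.inl (wtRoot n)

/-- The root of the right tree. -/
def wtTarget (n : ℕ) : WTV n := Sum.inr (wtRoot n)

instance (n : ℕ) : Inhabited (WTV n) := ⟨wtSource n⟩

/-- The index (among the `2^n` leaves of its tree) of a leaf. -/
def leafIdx {n : ℕ} (a : TV n) : Fin (2^n) := ⟨(a.2 : ℕ) % 2^n, Nat.mod_lt _ (by positivity)⟩

/-- Adjacency in the welded trees graph determined by the welding data `W`
(`W i j = true` iff the `i`-th left leaf is welded to the `j`-th right leaf). -/
def weldedAdj (n : ℕ) (W : Fin (2^n) → Fin (2^n) → Bool) : WTV n → WTV n → Prop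
  | Sum.inl a, Sum.inl b => treeAdj n a b
  | Sum.inr a, Sum.inr b => treeAdj n a b
  | Sum.inl a, Sum.inr b => (a.1 : ℕ) = n ∧ (b.1 : ℕ) = n ∧ W (leafIdx a) (leafIdx b) = true
  | Sum.inr b, Sum.inl a => (a.1 : ℕ) = n ∧ (b.1 : ℕ) = n ∧ W (leafIdx a) (leafIdx b) = true

/-- The welded trees graph determined by the welding data `W`. -/
def weldedGraph (n : ℕ) (W : Fin (2^n) → Fin (2^n) → Bool) : SimpleGraph (WTV n) where
  Adj := weldedAdj n W
  symm := by
    constructor; rintro (a|a) (b|b) h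
    · exact treeAdj_symm n h
    · exact h
    · exact h
    · exact treeAdj_symm n h
  loopless := by
    constructor; rintro (a|a) h
    · exact treeAdj_irrefl n a h
    · exact treeAdj_irrefl n a h

instance (n : ℕ) (W : Fin (2^n) → Fin (2^n) → Bool) : DecidableRel (weldedGraph n W).Adj := by
  rintro (a|a) (b|b)
  · exact inferInstanceAs (Decidable (treeAdj n a b))
  · exact inferInstanceAs (Decidable ((a.1 : ℕ) = n ∧ (b.1 : ℕ) = n ∧ W (leafIdx a) (leafIdx b) = true))
  · exact inferInstanceAs (Decidable ((b.1 : ℕ) = n ∧ (a.1 : ℕ) = n ∧ W (leafIdx b) (leafIdx a) = true))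
  · exact inferInstanceAs (Decidable (treeAdj n a b))

/-- The index of the column of a vertex: its distance to `source`. -/
def colIdx (n : ℕ) (W : Fin (2^n) → Fin (2^n) → Bool) (v : WTV n) : ℕ :=
  (weldedGraph n W).dist (wtSource n) v

/-- The `k`-th column: vertices at distance `k` from `source`. -/
def column (n : ℕ) (W : Fin (2^n) → Fin (2^n) → Bool) (k : ℕ) : Set (WTV n) :=
  {v | colIdx n W v = k}

/-- The bipartite graph on the leaves of the two trees given by the welding edges. -/
def weldGraphLeaves (n : ℕ) (W : Fin (2^n) → Fin (2^n) → Bool) :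
    SimpleGraph (Fin (2^n) ⊕ Fin (2^n)) where
  Adj x y := (∃ i j, x = Sum.inl i ∧ y = Sum.inr j ∧ W i j = true) ∨
             (∃ i j, x = Sum.inr j ∧ y = Sum.inl i ∧ W i j = true)
  symm := by
    constructor; rintro x y (⟨i, j, hx, hy, h⟩ | ⟨i, j, hx, hy, h⟩)
    · exact Or.inr ⟨i, j, hy, hx, h⟩
    · exact Or.inl ⟨i, j, hy, hx, h⟩
  loopless := by
    constructor; rintro x (⟨i, j, hx, hy, h⟩ | ⟨i, j, hx, hy, h⟩) <;> subst hx <;> simp_all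

/-- `W` is a valid welding datum: every leaf is welded to exactly two leaves of the other
tree, and the welding edges form a single cycle (equivalently, the 2-regular bipartite
welding graph on the `2^{n+1}` leaves is connected). -/
def IsWeldedData (n : ℕ) (W : Fin (2^n) → Fin (2^n) → Bool) : Prop :=
  (∀ i : Fin (2^n), (univ.filter (fun j => W i j = true)).card = 2) ∧
  (∀ j : Fin (2^n), (univ.filter (fun i => W i j = true)).card = 2) ∧
  (weldGraphLeaves n W).Connected

end
open SimpleGraph

namespace WeldedAux

/-- Extensionality for tree vertices via their numeric data. -/
lemma TV.ext' {n : ℕ} : ∀ {b b' : TV n}, (b.1 : ℕ) = (b'.1 : ℕ) → (b.2 : ℕ) = (b'.2 : ℕ) → b = b'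
  | ⟨⟨k, hk⟩, ⟨i, hi⟩⟩, ⟨⟨k', hk'⟩, ⟨i', hi'⟩⟩, h1, h2 => by
    simp only at h1 h2
    subst h1; subst h2; rfl

/-- The distance potential: level in the left tree, `2n+1 - level` in the right tree. -/
def pot (n : ℕ) : WTV n → ℕ
  | Sum.inl a => (a.1 : ℕ)
  | Sum.inr a => 2 * n + 1 - (a.1 : ℕ)

variable {n : ℕ} {W : Fin (2^n) → Fin (2^n) → Bool}

lemma pot_adj {u v : WTV n} (h : (weldedGraph n W).Adj u v) : pot n v ≤ pot n u + 1 := by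
  rcases u with a | a <;> rcases v with b | b <;>
    simp only [weldedGraph, weldedAdj, treeAdj, pot] at h ⊢ <;>
    have h1 := a.1.isLt <;> have h2 := b.1.isLt <;> omega

lemma pot_le_length {u v : WTV n} (p : (weldedGraph n W).Walk u v) :
    pot n v ≤ pot n u + p.length := by
  induction p with
  | nil => simp
  | cons h q ih =>
    have := pot_adj h
    simp only [SimpleGraph.Walk.length_cons]
    omega

lemma exists_walk_inl : ∀ (k : ℕ) (hk : k < n + 1) (i : Fin (2 ^ k)),
    ∃ p : (weldedGraph n W).Walk (wtSource n) (Sum.inl ⟨⟨k, hk⟩, i⟩), p.length = k := by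
  intro k
  induction k with
  | zero =>
    intro hk i
    have hi : (i : ℕ) = 0 := by
      have := i.isLt; omega
    have hv : (Sum.inl ⟨⟨0, hk⟩, i⟩ : WTV n) = wtSource n := by
      unfold wtSource wtRoot
      congr 1
      exact TV.ext' rfl hi
    rw [hv]
    exact ⟨SimpleGraph.Walk.nil, rfl⟩
  | succ k ih =>
    intro hk i
    have hk' : k < n + 1 := by omega
    have hi2 : (i : ℕ) / 2 < 2 ^ k := by
      have := i.isLt
      have : (i : ℕ) < 2 ^ k * 2 := by
        simpa [pow_succ] using i.isLt
      omega
    obtain ⟨p, hp⟩ := ih hk' ⟨(i : ℕ) / 2, hi2⟩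
    have hadj : (weldedGraph n W).Adj (Sum.inl ⟨⟨k, hk'⟩, ⟨(i : ℕ) / 2, hi2⟩⟩)
        (Sum.inl ⟨⟨k + 1, hk⟩, i⟩) := by
      show treeAdj n _ _
      exact Or.inl ⟨rfl, rfl⟩
    exact ⟨p.concat hadj, by simp [SimpleGraph.Walk.length_concat, hp]⟩

lemma pot_source : pot n (wtSource n) = 0 := rfl

lemma exists_walk_inl' (a : TV n) :
    ∃ p : (weldedGraph n W).Walk (wtSource n) (Sum.inl a), p.length = (a.1 : ℕ) := by
  have h := exists_walk_inl (W := W) (a.1 : ℕ) a.1.isLt ⟨(a.2 : ℕ), a.2.isLt⟩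
  have heq : (⟨⟨(a.1 : ℕ), a.1.isLt⟩, ⟨(a.2 : ℕ), a.2.isLt⟩⟩ : TV n) = a := TV.ext' rfl rfl
  rwa [heq] at h

lemma colIdx_inl (a : TV n) : colIdx n W (Sum.inl a) = (a.1 : ℕ) := by
  obtain ⟨p, hp⟩ := exists_walk_inl' (W := W) a
  have h1 : (weldedGraph n W).dist (wtSource n) (Sum.inl a) ≤ (a.1 : ℕ) := hp ▸ dist_le p
  have h2 : (a.1 : ℕ) ≤ (weldedGraph n W).dist (wtSource n) (Sum.inl a) := by
    obtain ⟨q, hq⟩ := Reachable.exists_walk_length_eq_dist ⟨p⟩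
    have := pot_le_length q
    rw [hq] at this
    rw [pot_source] at this
    simpa [pot] using this
  exact le_antisymm h1 h2

lemma colIdx_inr_leaf (hW : IsWeldedData n W) (b : TV n) (hb : (b.1 : ℕ) = n) :
    colIdx n W (Sum.inr b) = n + 1 := by
  classical
  obtain ⟨i, hi⟩ : ∃ i, W i (leafIdx b) = true := by
    have h2 := hW.2.1 (leafIdx b)
    have hpos : (Finset.univ.filter (fun i => W i (leafIdx b) = true)).Nonempty := by
      rw [← Finset.card_pos, h2]; norm_num
    obtain ⟨i, hi⟩ := hpos
    exact ⟨i, (Finset.mem_filter.mp hi).2⟩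
  have hleaf : leafIdx (⟨⟨n, Nat.lt_succ_self n⟩, ⟨(i : ℕ), i.isLt⟩⟩ : TV n) = i := by
    apply Fin.ext
    simp [leafIdx, Nat.mod_eq_of_lt i.isLt]
  have hadj : (weldedGraph n W).Adj
      (Sum.inl ⟨⟨n, Nat.lt_succ_self n⟩, ⟨(i : ℕ), i.isLt⟩⟩) (Sum.inr b) := by
    show (_ : ℕ) = n ∧ (b.1 : ℕ) = n ∧ _
    exact ⟨rfl, hb, by rw [hleaf]; exact hi⟩
  obtain ⟨p, hp⟩ := exists_walk_inl (W := W) n (Nat.lt_succ_self n) ⟨(i : ℕ), i.isLt⟩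
  have h1 : (weldedGraph n W).dist (wtSource n) (Sum.inr b) ≤ n + 1 := by
    have := dist_le (p.concat hadj)
    simpa [SimpleGraph.Walk.length_concat, hp] using this
  have h2 : n + 1 ≤ (weldedGraph n W).dist (wtSource n) (Sum.inr b) := by
    obtain ⟨q, hq⟩ := Reachable.exists_walk_length_eq_dist ⟨p.concat hadj⟩
    have hpl := pot_le_length q
    rw [hq] at hpl
    have : pot n (Sum.inr b) = n + 1 := by simp [pot, hb]; omega
    rw [this, pot_source] at hpl
    omega
  exact le_antisymm h1 h2

end WeldedAux



open WeldedAux in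
/-- Every cycle of a welded-trees graph contains at least one vertex of
column `C(n)` and at least one vertex of column `C(n+1)`. -/
theorem welded_trees_cycle_meets_middle (n : ℕ) (hn : 1 ≤ n)
    (W : Fin (2^n) → Fin (2^n) → Bool) (hW : IsWeldedData n W) :
    ∀ (u : WTV n) (c : (weldedGraph n W).Walk u u), c.IsCycle →
      (∃ v ∈ c.support, v ∈ column n W n) ∧ (∃ v ∈ c.support, v ∈ column n W (n+1)) := by
  classical
  intro u c hc
  -- main claim: the cycle contains a welding edge with both endpoints in the support
  have claim : ∃ a b : TV n, Sum.inl a ∈ c.support ∧ Sum.inr b ∈ c.support ∧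
      (weldedGraph n W).Adj (Sum.inl a) (Sum.inr b) := by
    by_contra hcl
    push_neg at hcl
    -- all support vertices lie on the same side
    have same : ∀ {x y : WTV n} (p : (weldedGraph n W).Walk x y),
        (∀ z ∈ p.support, z ∈ c.support) → ∀ z ∈ p.support, z.isLeft = x.isLeft := by
      intro x y p
      induction p with
      | nil =>
        intro _ z hz
        simp only [SimpleGraph.Walk.support_nil, List.mem_singleton] at hz
        subst hz; rfl
      | @cons x w y h q ih =>
        intro hsub z hz
        have hx : x ∈ c.support := hsub x (by simp)
        have hw : w ∈ c.support := hsub w (by simp)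
        have hxw : w.isLeft = x.isLeft := by
          rcases x with a | a <;> rcases w with b | b
          · rfl
          · exact absurd h (fun hadj => (hcl a b) hx hw hadj)
          · exact absurd h.symm (fun hadj => (hcl b a) hw hx hadj)
          · rfl
        rw [SimpleGraph.Walk.support_cons] at hz
        rcases List.mem_cons.mp hz with rfl | hz'
        · rfl
        · have := ih (fun z hzq => hsub z (by simp [hzq])) z hz'
          rw [this, hxw]
    have hsame : ∀ z ∈ c.support, z.isLeft = u.isLeft := same c (fun z h => h)
    -- pick a support vertex of maximal tree level
    set g : WTV n → ℕ := fun z => Sum.elim (fun a : TV n => (a.1 : ℕ)) (fun a : TV n => (a.1 : ℕ)) z with hg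
    have hne : c.support.toFinset.Nonempty :=
      ⟨u, List.mem_toFinset.mpr c.start_mem_support⟩
    obtain ⟨v, hvF, hmax⟩ := Finset.exists_max_image c.support.toFinset g hne
    have hv : v ∈ c.support := List.mem_toFinset.mp hvF
    have hmax' : ∀ z ∈ c.support, g z ≤ g v := fun z hz => hmax z (List.mem_toFinset.mpr hz)
    -- any two support-neighbours of `v` coincide (they are both its parent)
    have key : ∀ y z : WTV n, y ∈ c.support → z ∈ c.support →
        (weldedGraph n W).Adj v y → (weldedGraph n W).Adj v z → y = z := by
      intro y z hy hz hay haz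
      have hvy : y.isLeft = v.isLeft := by rw [hsame y hy, hsame v hv]
      have hvz : z.isLeft = v.isLeft := by rw [hsame z hz, hsame v hv]
      have hmy := hmax' y hy
      have hmz := hmax' z hz
      rcases v with a | a
      · rcases y with b | b
        · rcases z with b' | b'
          · -- both left: treeAdj forces both to be the parent of a
            have h1 : treeAdj n a b := hay
            have h2 : treeAdj n a b' := haz
            simp only [hg, Sum.elim_inl] at hmy hmz hmax'
            unfold treeAdj at h1 h2
            congr 1
            exact TV.ext' (by omega) (by omega)
          · simp at hvz
        · simp at hvy
      · rcases y with b | b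
        · simp at hvy
        · rcases z with b' | b'
          · simp at hvz
          · have h1 : treeAdj n a b := hay
            have h2 : treeAdj n a b' := haz
            simp only [hg, Sum.elim_inr] at hmy hmz
            unfold treeAdj at h1 h2
            congr 1
            exact TV.ext' (by omega) (by omega)
    -- rotate the cycle to start at `v` and look at its two neighbours there
    have hc' : (c.rotate v hv).IsCycle := hc.rotate hv
    have hsup : ∀ z ∈ (c.rotate v hv).support, z ∈ c.support := by
      intro z hz
      rw [SimpleGraph.Walk.support_eq_cons] at hz
      rcases List.mem_cons.mp hz with rfl | hz'
      · exact hv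
      · have := ((SimpleGraph.Walk.support_rotate c v hv).perm.mem_iff).mp hz'
        exact List.mem_of_mem_tail this
    obtain ⟨w, h, p, hceq⟩ := SimpleGraph.Walk.not_nil_iff.mp hc'.not_nil
    rw [hceq] at hc' hsup
    have hnot : s(v, w) ∉ p.edges := ((SimpleGraph.Walk.cons_isCycle_iff p h).mp hc').2
    have hwv : v ≠ w := h.ne
    obtain ⟨x, h2, q, hpr⟩ := SimpleGraph.Walk.exists_eq_cons_of_ne hwv p.reverse
    have hxedge : s(v, x) ∈ p.edges := by
      have : s(v, x) ∈ p.reverse.edges := by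
        rw [hpr, SimpleGraph.Walk.edges_cons]
        exact List.mem_cons_self
      rw [SimpleGraph.Walk.edges_reverse, List.mem_reverse] at this
      exact this
    have hxs : x ∈ c.support := by
      apply hsup
      rw [SimpleGraph.Walk.support_cons]
      exact List.mem_cons_of_mem _ (SimpleGraph.Walk.snd_mem_support_of_mem_edges p hxedge)
    have hws : w ∈ c.support := by
      apply hsup
      rw [SimpleGraph.Walk.support_cons]
      exact List.mem_cons_of_mem _ p.start_mem_support
    have hwx : w = x := key w x hws hxs h h2
    rw [← hwx] at hxedge
    exact hnot hxedge
  obtain ⟨a, b, ha, hb, hadj⟩ := claim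
  have hdata : (a.1 : ℕ) = n ∧ (b.1 : ℕ) = n ∧ W (leafIdx a) (leafIdx b) = true := hadj
  constructor
  · exact ⟨Sum.inl a, ha, by
      show colIdx n W (Sum.inl a) = n
      rw [WeldedAux.colIdx_inl, hdata.1]⟩
  · exact ⟨Sum.inr b, hb, by
      show colIdx n W (Sum.inr b) = n + 1
      exact WeldedAux.colIdx_inr_leaf hW b hdata.2.1⟩
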